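/- Both inclusions among the three equivalences are proper: provided T contains at least 3 threads and X at least 3 variables, there exist runs u,v with u ≡_B v but not u ≡_M v, and there exist runs u',v' with u' ≡_rf v' but not u' ≡_B v'. -/

import Mathlib

namespace TraceTheory

inductive Op : Type
  | rd : Op
  | wr : Op
deriving DecidableEq

structure Lbl (T X : Type) : Type where
  thread : T
  op : Op
  var : X
deriving DecidableEq

/-- A concurrent program run: a finite string over the concurrent alphabet. -/
abbrev Run (T X : Type) := List (Lbl T X)

/-- An event of a run: a symbol together with its occurrence number. -/
abbrev Event (T X : Type) := Lbl T X × ℕ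

variable {T X : Type} [DecidableEq T] [DecidableEq X]

/-- Dependence: same thread, or same variable with at least one write. -/
def Dep (a b : Lbl T X) : Prop :=
  a.thread = b.thread ∨ (a.var = b.var ∧ (a.op = Op.wr ∨ b.op = Op.wr))

/-- The event at position `i` of run `w`. -/
def evAt (w : Run T X) (i : Fin w.length) : Event T X :=
  (w.get i, (w.take (i : ℕ)).count (w.get i))

def HasEv (w : Run T X) (e : Event T X) : Prop := ∃ i : Fin w.length, evAt w i = e

/-- `e` occurs (strictly) before `f` in `w`. -/
def EvBefore (w : Run T X) (e f : Event T X) : Prop :=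
  ∃ i j : Fin w.length, (i : ℕ) < (j : ℕ) ∧ evAt w i = e ∧ evAt w j = f

/-- Program order. -/
def po (w : Run T X) (e f : Event T X) : Prop :=
  e.1.thread = f.1.thread ∧ EvBefore w e f

/-- Reads-from: `f` is a read that observes the write `e` (the last write on
the same variable before `f`). -/
def rf (w : Run T X) (e f : Event T X) : Prop :=
  e.1.op = Op.wr ∧ f.1.op = Op.rd ∧ e.1.var = f.1.var ∧
  ∃ i j : Fin w.length, evAt w i = e ∧ evAt w j = f ∧ (i : ℕ) < (j : ℕ) ∧
    ∀ k : Fin w.length, (i : ℕ) < (k : ℕ) → (k : ℕ) < (j : ℕ) →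
      ¬ ((w.get k).op = Op.wr ∧ (w.get k).var = f.1.var)

/-- Every read is preceded by a write on the same variable. -/
def WellFormed (w : Run T X) : Prop :=
  ∀ j : Fin w.length, (w.get j).op = Op.rd →
    ∃ i : Fin w.length, (i : ℕ) < (j : ℕ) ∧ (w.get i).op = Op.wr ∧
      (w.get i).var = (w.get j).var

/-- Reads-from equivalence. -/
def RfEquiv (w w' : Run T X) : Prop :=
  w.Perm w' ∧ po w = po w' ∧ rf w = rf w'

/-- A single Mazurkiewicz swap of two adjacent independent symbols. -/
inductive MazSwap : Run T X → Run T X → Prop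
  | swap (u v : Run T X) (a b : Lbl T X) (h : ¬ Dep a b) :
      MazSwap (u ++ a :: b :: v) (u ++ b :: a :: v)

/-- Trace (Mazurkiewicz) equivalence: the smallest equivalence closed under swaps. -/
def MazEquiv (w w' : Run T X) : Prop := Relation.EqvGen MazSwap w w'

/-- The trace (happens-before) partial order of a run. -/
def MazOrder (w : Run T X) : Event T X → Event T X → Prop :=
  Relation.TransGen (fun e f => EvBefore w e f ∧ Dep e.1 f.1)

/-- `B` is a block word (one write followed by reads of the same variable) that is
valid as a contiguous segment whose suffix (remainder of the run) is `s`: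
no read after the block reads from the block's write. -/
def ValidBlockSeg (B s : Run T X) : Prop :=
  ∃ a rest, B = a :: rest ∧ a.op = Op.wr ∧
    (∀ b ∈ rest, b.op = Op.rd ∧ b.var = a.var) ∧
    ∀ j : Fin s.length, (s.get j).op = Op.rd → (s.get j).var = a.var →
      ∃ m : Fin s.length, (m : ℕ) < (j : ℕ) ∧ (s.get m).op = Op.wr ∧
        (s.get m).var = a.var

def ThreadsDisjoint (B B' : Run T X) : Prop :=
  ∀ a ∈ B, ∀ b ∈ B', a.thread ≠ b.thread

/-- A single block-equivalence step (clause (i): block swap, clause (ii): event swap). -/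
inductive BlkSwap : Run T X → Run T X → Prop
  | block (p B B' s : Run T X) (hB : ValidBlockSeg B (B' ++ s)) (hB' : ValidBlockSeg B' s)
      (hd : ThreadsDisjoint B B') :
      BlkSwap (p ++ B ++ B' ++ s) (p ++ B' ++ B ++ s)
  | single (p s : Run T X) (a b : Lbl T X) (ht : a.thread ≠ b.thread)
      (h : a.var ≠ b.var ∨ (a.op = Op.rd ∧ b.op = Op.rd)) :
      BlkSwap (p ++ a :: b :: s) (p ++ b :: a :: s)

/-- Block equivalence: smallest reflexive transitive relation closed under the swaps. -/
def BlkEquiv : Run T X → Run T X → Prop := Relation.ReflTransGen BlkSwap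

/-- The set of events of the segment `B` of a run, given the prefix `p` preceding it. -/
def segEvents (p B : Run T X) : Set (Event T X) :=
  { e | ∃ i : Fin B.length, e = (B.get i, ((p ++ B.take (i : ℕ)).count (B.get i))) }

/-- Block-equivalence steps where block swaps are restricted to blocks from `𝔹`. -/
inductive BlkSwapIn (𝔹 : Set (Set (Event T X))) : Run T X → Run T X → Prop
  | block (p B B' s : Run T X) (hB : ValidBlockSeg B (B' ++ s)) (hB' : ValidBlockSeg B' s)
      (hBmem : segEvents p B ∈ 𝔹) (hB'mem : segEvents (p ++ B) B' ∈ 𝔹)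
      (hd : ThreadsDisjoint B B') :
      BlkSwapIn 𝔹 (p ++ B ++ B' ++ s) (p ++ B' ++ B ++ s)
  | single (p s : Run T X) (a b : Lbl T X) (ht : a.thread ≠ b.thread)
      (h : a.var ≠ b.var ∨ (a.op = Op.rd ∧ b.op = Op.rd)) :
      BlkSwapIn 𝔹 (p ++ a :: b :: s) (p ++ b :: a :: s)

/-- Block equivalence restricted to the set of blocks `𝔹`. -/
def BlkEquivIn (𝔹 : Set (Set (Event T X))) : Run T X → Run T X → Prop :=
  Relation.ReflTransGen (BlkSwapIn 𝔹)

/-- A valid block of `w` (as a set of events): a write event together with exactly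
the reads of `w` that read from it. -/
def IsValidBlockOf (w : Run T X) (S : Set (Event T X)) : Prop :=
  ∃ e : Event T X, HasEv w e ∧ e.1.op = Op.wr ∧ S = insert e { f | rf w e f }

def ValidBlocks (w : Run T X) (𝔹 : Set (Set (Event T X))) : Prop :=
  ∀ S ∈ 𝔹, IsValidBlockOf w S

/-- Block `S` occurs as a contiguous subword of `u`. -/
def SerialIn (u : Run T X) (S : Set (Event T X)) : Prop :=
  ∃ p B s, u = p ++ B ++ s ∧ segEvents p B = S

/-- Liberal atomicity of a run `v` with respect to a set of blocks `𝔹`. -/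
def LiberallyAtomic (v : Run T X) (𝔹 : Set (Set (Event T X))) : Prop :=
  ∃ u, BlkEquivIn 𝔹 u v ∧ ∀ S ∈ 𝔹, SerialIn u S

/-- Conflict serializability of a run `v` with respect to a set of blocks `𝔹`. -/
def ConflictSerializable (v : Run T X) (𝔹 : Set (Set (Event T X))) : Prop :=
  ∃ u, MazEquiv u v ∧ ∀ S ∈ 𝔹, SerialIn u S

/-- The block-happens-before order `≺_𝔹`. -/
def Bhb (w : Run T X) (𝔹 : Set (Set (Event T X))) : Event T X → Event T X → Prop :=
  Relation.TransGen (fun e f =>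
    EvBefore w e f ∧ Dep e.1 f.1 ∧
    ¬ (e.1.thread ≠ f.1.thread ∧ ∃ B ∈ 𝔹, ∃ B' ∈ 𝔹, B ≠ B' ∧ e ∈ B ∧ f ∈ B'))

/-- The saturated order `⪻_𝔹` on events (`Sum.inl`) and blocks (`Sum.inr`). -/
inductive Sat (w : Run T X) (𝔹 : Set (Set (Event T X))) :
    (Event T X ⊕ Set (Event T X)) → (Event T X ⊕ Set (Event T X)) → Prop
  | base {e f : Event T X} : Bhb w 𝔹 e f → Sat w 𝔹 (Sum.inl e) (Sum.inl f)
  | toBlk {e f : Event T X} {B B' : Set (Event T X)} :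
      e.1.var = f.1.var → B ∈ 𝔹 → B' ∈ 𝔹 → e ∈ B → f ∈ B' → B ≠ B' →
      Sat w 𝔹 (Sum.inl e) (Sum.inl f) → Sat w 𝔹 (Sum.inr B) (Sum.inr B')
  | ofBlk {B B' : Set (Event T X)} {e f : Event T X} :
      Sat w 𝔹 (Sum.inr B) (Sum.inr B') → e ∈ B → f ∈ B' →
      Sat w 𝔹 (Sum.inl e) (Sum.inl f)

/-- The event part of the saturated order `⪻_𝔹`. -/
def SatEv (w : Run T X) (𝔹 : Set (Set (Event T X))) (e f : Event T X) : Prop :=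
  Sat w 𝔹 (Sum.inl e) (Sum.inl f)

def SameVarBlocks (B B' : Set (Event T X)) : Prop :=
  ∃ x : X, (∀ e ∈ B, e.1.var = x) ∧ (∀ e ∈ B', e.1.var = x)

/-- No two distinct blocks of `𝔹` on the same variable overlap in `v`. -/
def NoOverlap (v : Run T X) (𝔹 : Set (Set (Event T X))) : Prop :=
  ∀ B ∈ 𝔹, ∀ B' ∈ 𝔹, B ≠ B' → SameVarBlocks B B' →
    (∀ e ∈ B, ∀ f ∈ B', EvBefore v e f) ∨ (∀ e ∈ B, ∀ f ∈ B', EvBefore v f e)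

/-- `v` is a proper linearization (of the events of `w`) of the order `ord`. -/
def ProperLin (w : Run T X) (𝔹 : Set (Set (Event T X)))
    (ord : Event T X → Event T X → Prop) (v : Run T X) : Prop :=
  w.Perm v ∧ (∀ e f, ord e f → EvBefore v e f) ∧ NoOverlap v 𝔹


/-- `e` is causally ordered before `f` under reads-from equivalence:
`e` occurs before `f` in every reads-from equivalent run. -/
def CausOrd (w : Run T X) (e f : Event T X) : Prop :=
  ∀ w', RfEquiv w w' → EvBefore w' e f

/-- `e` and `f` are causally concurrent under reads-from equivalence. -/
def CausConc (w : Run T X) (e f : Event T X) : Prop :=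
  ¬ CausOrd w e f ∧ ¬ CausOrd w f e
section AuxProofs
variable {T X : Type} [DecidableEq T] [DecidableEq X]
set_option linter.unusedSectionVars false
set_option maxHeartbeats 1000000

private lemma fin_val_ofNat {n : ℕ} [NeZero n] (i : ℕ) :
    ((no_index (OfNat.ofNat i) : Fin n) : ℕ) = OfNat.ofNat i % n := rfl

private lemma filter_mazSwap (p : Lbl T X → Bool)
    (hp : ∀ c d : Lbl T X, ¬ Dep c d → ¬(p c = true ∧ p d = true)) :
    ∀ {u v : Run T X}, MazSwap u v → u.filter p = v.filter p := by
  intro u v h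
  cases h with
  | swap u v a b hI =>
    simp only [List.filter_append]
    have h2 := hp a b hI
    cases hpa : p a <;> cases hpb : p b <;>
      simp_all [List.filter_cons]

private lemma filter_mazEquiv (p : Lbl T X → Bool)
    (hp : ∀ c d : Lbl T X, ¬ Dep c d → ¬(p c = true ∧ p d = true))
    {u v : Run T X} (h : MazEquiv u v) : u.filter p = v.filter p := by
  induction h with
  | rel _ _ h => exact filter_mazSwap p hp h
  | refl _ => rfl
  | symm _ _ _ ih => exact ih.symm
  | trans _ _ _ _ _ ih1 ih2 => exact ih1.trans ih2

private lemma evBefore_four (l0 l1 l2 l3 : Lbl T X)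
    (h01 : l0 ≠ l1) (h02 : l0 ≠ l2) (h03 : l0 ≠ l3)
    (h12 : l1 ≠ l2) (h13 : l1 ≠ l3) (h23 : l2 ≠ l3)
    (e f : Event T X) :
    EvBefore [l0,l1,l2,l3] e f ↔
      ((e = (l0,0) ∧ (f = (l1,0) ∨ f = (l2,0) ∨ f = (l3,0))) ∨
       (e = (l1,0) ∧ (f = (l2,0) ∨ f = (l3,0))) ∨
       (e = (l2,0) ∧ f = (l3,0))) := by
  constructor
  · rintro ⟨i, j, hij, rfl, rfl⟩
    fin_cases i <;> fin_cases j <;>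
      simp_all [evAt, List.count_cons, fin_val_ofNat,
        h01.symm, h02.symm, h03.symm, h12.symm, h13.symm, h23.symm]
  · rintro (⟨rfl, rfl | rfl | rfl⟩ | ⟨rfl, rfl | rfl⟩ | ⟨rfl, rfl⟩)
    · exact ⟨⟨0, by simp⟩, ⟨1, by simp⟩, by simp,
        by simp [evAt], by simp [evAt, List.count_cons, h01.symm, h01]⟩
    · exact ⟨⟨0, by simp⟩, ⟨2, by simp⟩, by simp,
        by simp [evAt], by simp [evAt, List.count_cons, h02.symm, h12.symm, h02, h12]⟩
    · exact ⟨⟨0, by simp⟩, ⟨3, by simp⟩, by simp,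
        by simp [evAt], by simp [evAt, List.count_cons, fin_val_ofNat, h03.symm, h13.symm, h23.symm, h03, h13, h23]⟩
    · exact ⟨⟨1, by simp⟩, ⟨2, by simp⟩, by simp,
        by simp [evAt, List.count_cons, h01.symm, h01], by simp [evAt, List.count_cons, h02.symm, h12.symm, h02, h12]⟩
    · exact ⟨⟨1, by simp⟩, ⟨3, by simp⟩, by simp,
        by simp [evAt, List.count_cons, h01.symm, h01],
        by simp [evAt, List.count_cons, fin_val_ofNat, h03.symm, h13.symm, h23.symm, h03, h13, h23]⟩
    · exact ⟨⟨2, by simp⟩, ⟨3, by simp⟩, by simp,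
        by simp [evAt, List.count_cons, h02.symm, h12.symm, h02, h12],
        by simp [evAt, List.count_cons, fin_val_ofNat, h03.symm, h13.symm, h23.symm, h03, h13, h23]⟩

private lemma po_eq_part2 (t1 t2 : T) (x y : X) (ht : t1 ≠ t2) (hxy : x ≠ y) :
    po ([⟨t1,.wr,x⟩, ⟨t1,.wr,y⟩, ⟨t1,.rd,x⟩, ⟨t2,.wr,x⟩] : Run T X)
      = po ([⟨t2,.wr,x⟩, ⟨t1,.wr,x⟩, ⟨t1,.wr,y⟩, ⟨t1,.rd,x⟩] : Run T X) := by
  have hAB : (⟨t1,.wr,x⟩ : Lbl T X) ≠ ⟨t1,.wr,y⟩ := by simp [hxy]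
  have hAC : (⟨t1,.wr,x⟩ : Lbl T X) ≠ ⟨t1,.rd,x⟩ := by simp
  have hAD : (⟨t1,.wr,x⟩ : Lbl T X) ≠ ⟨t2,.wr,x⟩ := by simp [ht]
  have hBC : (⟨t1,.wr,y⟩ : Lbl T X) ≠ ⟨t1,.rd,x⟩ := by simp
  have hBD : (⟨t1,.wr,y⟩ : Lbl T X) ≠ ⟨t2,.wr,x⟩ := by simp [ht]
  have hCD : (⟨t1,.rd,x⟩ : Lbl T X) ≠ ⟨t2,.wr,x⟩ := by simp [ht]
  funext e f
  apply propext
  unfold po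
  rw [evBefore_four _ _ _ _ hAB hAC hAD hBC hBD hCD,
      evBefore_four _ _ _ _ hAD.symm hBD.symm hCD.symm hAB hAC hBC]
  constructor <;> rintro ⟨hth, h⟩ <;> refine ⟨hth, ?_⟩ <;>
    rcases h with (⟨rfl, rfl | rfl | rfl⟩ | ⟨rfl, rfl | rfl⟩ | ⟨rfl, rfl⟩) <;>
    simp_all [ht.symm]

end AuxProofs
section RfProofs
variable {T X : Type} [DecidableEq T] [DecidableEq X]
set_option linter.unusedSectionVars false
set_option maxHeartbeats 1000000

private lemma rf_u2 (t1 t2 : T) (x y : X) (ht : t1 ≠ t2) (hxy : x ≠ y) (e f : Event T X) :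
    rf ([⟨t1,.wr,x⟩, ⟨t1,.wr,y⟩, ⟨t1,.rd,x⟩, ⟨t2,.wr,x⟩] : Run T X) e f ↔
      (e = (⟨t1,.wr,x⟩, 0) ∧ f = (⟨t1,.rd,x⟩, 0)) := by
  constructor
  · rintro ⟨hew, hfr, hvar, i, j, rfl, rfl, hij, hmin⟩
    fin_cases i <;> fin_cases j <;>
      simp_all [evAt, List.count_cons, fin_val_ofNat, ht, ht.symm, hxy, hxy.symm]
  · rintro ⟨rfl, rfl⟩
    refine ⟨rfl, rfl, rfl, ⟨0, by simp⟩, ⟨2, by simp⟩, by simp [evAt],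
      by simp [evAt, List.count_cons, hxy.symm], by simp, ?_⟩
    intro k hk1 hk2
    fin_cases k <;> simp_all [fin_val_ofNat, hxy, hxy.symm]

private lemma rf_v2 (t1 t2 : T) (x y : X) (ht : t1 ≠ t2) (hxy : x ≠ y) (e f : Event T X) :
    rf ([⟨t2,.wr,x⟩, ⟨t1,.wr,x⟩, ⟨t1,.wr,y⟩, ⟨t1,.rd,x⟩] : Run T X) e f ↔
      (e = (⟨t1,.wr,x⟩, 0) ∧ f = (⟨t1,.rd,x⟩, 0)) := by
  constructor
  · rintro ⟨hew, hfr, hvar, i, j, rfl, rfl, hij, hmin⟩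
    fin_cases i <;> fin_cases j <;>
      simp_all [evAt, List.count_cons, fin_val_ofNat, ht, ht.symm, hxy, hxy.symm]
    · -- possibly leftover case i=0 (w t2 x), j=3 (r t1 x): refute via hmin at k=1
      exact absurd (hmin ⟨1, by simp⟩ (by simp) (by simp [fin_val_ofNat]))
        (by simp [evAt])
  · rintro ⟨rfl, rfl⟩
    refine ⟨rfl, rfl, rfl, ⟨1, by simp⟩, ⟨3, by simp⟩,
      by simp [evAt, List.count_cons, ht.symm],
      by simp [evAt, List.count_cons, fin_val_ofNat, hxy.symm], by simp [fin_val_ofNat], ?_⟩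
    intro k hk1 hk2
    fin_cases k <;> simp_all [fin_val_ofNat, hxy, hxy.symm]

end RfProofs
section PartProofs
variable {T X : Type} [DecidableEq T] [DecidableEq X]
set_option linter.unusedSectionVars false
set_option maxHeartbeats 1000000

private lemma no_blkswap_u2 (t1 t2 : T) (x y : X) (ht : t1 ≠ t2) (hxy : x ≠ y)
    (c : Run T X)
    (h : BlkSwap ([⟨t1,.wr,x⟩, ⟨t1,.wr,y⟩, ⟨t1,.rd,x⟩, ⟨t2,.wr,x⟩] : Run T X) c) : False := by
  generalize hE : ([⟨t1,.wr,x⟩, ⟨t1,.wr,y⟩, ⟨t1,.rd,x⟩, ⟨t2,.wr,x⟩] : Run T X) = u0 at h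
  cases h with
  | block p B B' s hB hB' hd =>
    obtain ⟨a, rest, rfl, haop, hrest, -⟩ := hB
    obtain ⟨a', rest', rfl, ha'op, hrest', -⟩ := hB'
    rcases p with _|⟨p0, _|⟨p1, _|⟨p2, p⟩⟩⟩ <;>
      rcases rest with _|⟨r0, rest⟩ <;>
      simp only [List.nil_append, List.cons_append, List.append_assoc,
        List.cons.injEq] at hE
    · obtain ⟨rfl, rfl, -⟩ := hE
      exact hd _ List.mem_cons_self _ List.mem_cons_self rfl
    · obtain ⟨-, rfl, -⟩ := hE
      exact absurd (hrest _ List.mem_cons_self).1 (by simp)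
    · obtain ⟨-, -, rfl, -⟩ := hE
      exact absurd ha'op (by simp)
    · obtain ⟨-, rfl, rfl, -⟩ := hE
      exact absurd (hrest _ List.mem_cons_self).2 (by simpa using hxy)
    · obtain ⟨-, -, rfl, -⟩ := hE
      exact absurd haop (by simp)
    · obtain ⟨-, -, rfl, -⟩ := hE
      exact absurd haop (by simp)
    · have := congrArg List.length hE.2.2.2
      simp at this
      omega
    · have := congrArg List.length hE.2.2.2
      simp at this
      omega
  | single p s a b hth hor =>
    rcases p with _|⟨p0, _|⟨p1, _|⟨p2, p⟩⟩⟩ <;>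
      simp only [List.nil_append, List.cons_append, List.cons.injEq] at hE
    · obtain ⟨rfl, rfl, -⟩ := hE
      exact hth rfl
    · obtain ⟨-, rfl, rfl, -⟩ := hE
      exact hth rfl
    · obtain ⟨-, -, rfl, rfl, -⟩ := hE
      rcases hor with h | h
      · exact h rfl
      · exact absurd h.2 (by simp)
    · have := congrArg List.length hE.2.2.2
      simp at this
      omega

private lemma part1 (t1 t2 t3 : T) (x : X)
    (h12 : t1 ≠ t2) (h13 : t1 ≠ t3) (h23 : t2 ≠ t3) :
    ∃ u v : Run T X, WellFormed u ∧ WellFormed v ∧ BlkEquiv u v ∧ ¬ MazEquiv u v := by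
  refine ⟨[⟨t1,.wr,x⟩, ⟨t2,.rd,x⟩, ⟨t3,.wr,x⟩], [⟨t3,.wr,x⟩, ⟨t1,.wr,x⟩, ⟨t2,.rd,x⟩],
    ?_, ?_, ?_, ?_⟩
  · intro j hj
    fin_cases j
    · exact absurd hj (by simp)
    · exact ⟨⟨0, by simp⟩, by simp, rfl, rfl⟩
    · exact absurd hj (by simp)
  · intro j hj
    fin_cases j
    · exact absurd hj (by simp)
    · exact absurd hj (by simp)
    · exact ⟨⟨1, by simp⟩, by simp [fin_val_ofNat], rfl, rfl⟩
  · refine Relation.ReflTransGen.single ?_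
    have h : BlkSwap (([] : Run T X) ++ [⟨t1,.wr,x⟩, ⟨t2,.rd,x⟩] ++ [⟨t3,.wr,x⟩] ++ [])
        (([] : Run T X) ++ [⟨t3,.wr,x⟩] ++ [⟨t1,.wr,x⟩, ⟨t2,.rd,x⟩] ++ []) := by
      refine BlkSwap.block _ _ _ _ ?_ ?_ ?_
      · refine ⟨_, _, rfl, rfl, by simp, ?_⟩
        intro j hj
        fin_cases j <;> simp_all
      · refine ⟨_, _, rfl, rfl, by simp, ?_⟩
        intro j hj
        fin_cases j
      · intro a ha b hb
        simp at ha hb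
        subst hb
        rcases ha with rfl | rfl <;> simpa using (by assumption : _ ≠ t3)
    simpa using h
  · intro hM
    have hfil := filter_mazEquiv
      (fun l => decide (l = (⟨t1,.wr,x⟩ : Lbl T X)) || decide (l = (⟨t3,.wr,x⟩ : Lbl T X)))
      ?_ hM
    · simp [List.filter_cons, h12.symm, h13, h13.symm, h23.symm] at hfil
    · intro c d hI hcd
      obtain ⟨hc, hd⟩ := hcd
      simp only [Bool.or_eq_true, decide_eq_true_eq] at hc hd
      apply hI
      rcases hc with rfl | rfl <;> rcases hd with rfl | rfl <;> simp [Dep]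

private lemma part2 (t1 t2 : T) (x y : X) (ht : t1 ≠ t2) (hxy : x ≠ y) :
    ∃ u v : Run T X, WellFormed u ∧ WellFormed v ∧ RfEquiv u v ∧ ¬ BlkEquiv u v := by
  refine ⟨[⟨t1,.wr,x⟩, ⟨t1,.wr,y⟩, ⟨t1,.rd,x⟩, ⟨t2,.wr,x⟩],
    [⟨t2,.wr,x⟩, ⟨t1,.wr,x⟩, ⟨t1,.wr,y⟩, ⟨t1,.rd,x⟩], ?_, ?_, ⟨?_, ?_, ?_⟩, ?_⟩
  · intro j hj
    fin_cases j
    · exact absurd hj (by simp)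
    · exact absurd hj (by simp)
    · exact ⟨⟨0, by simp⟩, by simp, rfl, rfl⟩
    · exact absurd hj (by simp [fin_val_ofNat])
  · intro j hj
    fin_cases j
    · exact absurd hj (by simp)
    · exact absurd hj (by simp)
    · exact absurd hj (by simp)
    · exact ⟨⟨1, by simp⟩, by simp [fin_val_ofNat], rfl, rfl⟩
  · have h : (([⟨t1,.wr,x⟩, ⟨t1,.wr,y⟩, ⟨t1,.rd,x⟩] : Run T X) ++ ([⟨t2,.wr,x⟩] : Run T X)).Perm
        (([⟨t2,.wr,x⟩] : Run T X) ++ ([⟨t1,.wr,x⟩, ⟨t1,.wr,y⟩, ⟨t1,.rd,x⟩] : Run T X)) :=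
      List.perm_append_comm
    simpa using h
  · exact po_eq_part2 t1 t2 x y ht hxy
  · funext e f
    exact propext ((rf_u2 t1 t2 x y ht hxy e f).trans (rf_v2 t1 t2 x y ht hxy e f).symm)
  · intro h
    rcases Relation.ReflTransGen.cases_head h with heq | ⟨c, hc, -⟩
    · simp [ht.symm] at heq
    · exact no_blkswap_u2 t1 t2 x y ht hxy c hc

end PartProofs

/-- both inclusions `≡_M ⊆ ≡_B ⊆ ≡_rf` are proper, provided there
are at least 3 threads and 3 variables. -/
theorem block_equiv_inclusions_proper
    (T X : Type) [DecidableEq T] [DecidableEq X] [Fintype T] [Fintype X]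
    (hT : 3 ≤ Fintype.card T) (hX : 3 ≤ Fintype.card X) :
    (∃ u v : Run T X, WellFormed u ∧ WellFormed v ∧ BlkEquiv u v ∧ ¬ MazEquiv u v) ∧
    (∃ u v : Run T X, WellFormed u ∧ WellFormed v ∧ RfEquiv u v ∧ ¬ BlkEquiv u v) := by
  obtain ⟨fT⟩ := Function.Embedding.nonempty_of_card_le (α := Fin 3) (β := T)
    (by simpa using hT)
  obtain ⟨x, y, hxy⟩ := Fintype.exists_pair_of_one_lt_card (α := X) (by omega)
  have h12 : fT 0 ≠ fT 1 := fun h => by simpa using fT.injective h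
  have h13 : fT 0 ≠ fT 2 := fun h => by simpa using fT.injective h
  have h23 : fT 1 ≠ fT 2 := fun h => by simpa using fT.injective h
  exact ⟨part1 (fT 0) (fT 1) (fT 2) x h12 h13 h23, part2 (fT 0) (fT 1) x y h12 hxy⟩

end TraceTheory
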